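/- Let K be a field and let d, k be natural numbers with k even and b = dk + t where 2d/3 < t < d. Then there exist λ_{ij} ∈ K, not all zero, indexed by pairs (i,j) with i + j = k/2, such that Σ_{i+j=k/2} λ_{ij} X^{di} Y^{dj} (X^d + Y^d)^{k+1} lies in the ideal (X^b, Y^b) of K[X,Y]. -/

import Mathlib

open MvPolynomial Finset

theorem stmt_5 (K : Type*) [Field K] (d k t b : ℕ) (hd : 1 ≤ d) (hk : Even k)
    (ht : t < d) (ht2 : 2 * d < 3 * t) (hb : b = d * k + t) :
    ∃ lam : Fin (k / 2 + 1) → K, lam ≠ 0 ∧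
      (∑ i : Fin (k / 2 + 1),
          C (lam i) * X 0 ^ (d * (i : ℕ)) * X 1 ^ (d * (k / 2 - (i : ℕ)))
            * ((X 0 : MvPolynomial (Fin 2) K) ^ d + X 1 ^ d) ^ (k + 1))
        ∈ Ideal.span {(X 0 : MvPolynomial (Fin 2) K) ^ b, X 1 ^ b} := by
  obtain ⟨n, hn⟩ := hk
  set m := k / 2 with hm2
  have hm : k = m + m := by omega
  have ht1 : 1 ≤ t := by omega
  set I : Ideal (MvPolynomial (Fin 2) K) :=
    Ideal.span {(X 0 : MvPolynomial (Fin 2) K) ^ b, X 1 ^ b} with hI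
  have hxb : (X 0 : MvPolynomial (Fin 2) K) ^ b ∈ I := by
    exact Ideal.subset_span (Set.mem_insert _ _)
  have hyb : (X 1 : MvPolynomial (Fin 2) K) ^ b ∈ I := by
    exact Ideal.subset_span (Set.mem_insert_of_mem _ rfl)
  have hxI : ∀ e, b ≤ e → (X 0 : MvPolynomial (Fin 2) K) ^ e ∈ I := by
    intro e he
    have : e = b + (e - b) := by omega
    rw [this, pow_add]
    exact Ideal.mul_mem_right _ _ hxb
  have hyI : ∀ e, b ≤ e → (X 1 : MvPolynomial (Fin 2) K) ^ e ∈ I := by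
    intro e he
    have : e = b + (e - b) := by omega
    rw [this, pow_add]
    exact Ideal.mul_mem_right _ _ hyb
  -- linear algebra: nontrivial kernel
  set A : Matrix (Fin m) (Fin (m + 1)) K :=
    fun j i => ((k + 1).choose (m + 1 + (j : ℕ) - (i : ℕ)) : K) with hA
  have hker : LinearMap.ker A.mulVecLin ≠ ⊥ := by
    apply LinearMap.ker_ne_bot_of_finrank_lt
    simp [Module.finrank_fin_fun]
  obtain ⟨lam, hlam0, hlamne⟩ := (Submodule.ne_bot_iff _).mp hker
  refine ⟨lam, hlamne, ?_⟩
  have hlam : ∀ s : ℕ, m + 1 ≤ s → s ≤ k →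
      ∑ i : Fin (m + 1), lam i * ((k + 1).choose (s - (i : ℕ)) : K) = 0 := by
    intro s hs1 hs2
    have hj : s - (m + 1) < m := by omega
    have := congrFun (LinearMap.mem_ker.mp hlam0) ⟨s - (m + 1), hj⟩
    simp only [Matrix.mulVecLin_apply, Matrix.mulVec, dotProduct, hA,
      Pi.zero_apply] at this
    rw [← this]
    apply Finset.sum_congr rfl
    intro i _
    have : m + 1 + (s - (m + 1)) - (i : ℕ) = s - (i : ℕ) := by omega
    simp only [Fin.val_mk]
    rw [this, mul_comm]
  -- expand the power
  rw [add_pow]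
  -- turn into a double sum over a product finset
  have hrw : (∑ i : Fin (m + 1),
      C (lam i) * X 0 ^ (d * (i : ℕ)) * X 1 ^ (d * (m - (i : ℕ)))
        * ∑ u ∈ range (k + 1 + 1), ((X 0 : MvPolynomial (Fin 2) K) ^ d) ^ u
            * (X 1 ^ d) ^ (k + 1 - u) * ((k + 1).choose u : MvPolynomial (Fin 2) K))
      = ∑ p ∈ (univ : Finset (Fin (m + 1))) ×ˢ range (k + 1 + 1),
          C (lam p.1) * X 0 ^ (d * (p.1 : ℕ)) * X 1 ^ (d * (m - (p.1 : ℕ)))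
            * (((X 0 : MvPolynomial (Fin 2) K) ^ d) ^ p.2
              * (X 1 ^ d) ^ (k + 1 - p.2) * ((k + 1).choose p.2 : MvPolynomial (Fin 2) K)) := by
    rw [Finset.sum_product]
    simp [Finset.mul_sum]
  rw [hrw]
  set T : Fin (m + 1) → ℕ → MvPolynomial (Fin 2) K := fun i u =>
    C (lam i) * X 0 ^ (d * (i : ℕ)) * X 1 ^ (d * (m - (i : ℕ)))
      * (((X 0 : MvPolynomial (Fin 2) K) ^ d) ^ u
        * (X 1 ^ d) ^ (k + 1 - u) * ((k + 1).choose u : MvPolynomial (Fin 2) K)) with hT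
  show (∑ p ∈ (univ : Finset (Fin (m + 1))) ×ˢ range (k + 1 + 1), T p.1 p.2) ∈ I
  rw [← Finset.sum_filter_add_sum_filter_not _ (fun p => (p.1 : ℕ) + p.2 ≤ k)]
  apply Ideal.add_mem
  · -- i + u ≤ k
    rw [← Finset.sum_filter_add_sum_filter_not _ (fun p => m + 1 ≤ (p.1 : ℕ) + p.2)]
    apply Ideal.add_mem
    · -- middle part: equals 0
      have hmid : (∑ p ∈ (((univ : Finset (Fin (m + 1))) ×ˢ range (k + 1 + 1)).filter
            (fun p => (p.1 : ℕ) + p.2 ≤ k)).filter (fun p => m + 1 ≤ (p.1 : ℕ) + p.2),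
          T p.1 p.2)
          = ∑ q ∈ (Finset.Icc (m + 1) k) ×ˢ (univ : Finset (Fin (m + 1))),
              T q.2 (q.1 - (q.2 : ℕ)) := by
        refine Finset.sum_nbij' (g := fun q : ℕ × Fin (m + 1) => T q.2 (q.1 - (q.2 : ℕ)))
          (i := fun p : Fin (m + 1) × ℕ => ((p.1 : ℕ) + p.2, p.1)) (j := fun q : ℕ × Fin (m + 1) => (q.2, q.1 - (q.2 : ℕ)))
          ?_ ?_ ?_ ?_ ?_
        · intro p hp
          simp only [Finset.mem_filter, Finset.mem_product, Finset.mem_range,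
            Finset.mem_univ, true_and] at hp ⊢
          simp only [Finset.mem_product, Finset.mem_Icc, Finset.mem_univ, and_true]
          omega
        · intro q hq
          simp only [Finset.mem_product, Finset.mem_Icc, Finset.mem_univ, and_true] at hq
          simp only [Finset.mem_filter, Finset.mem_product, Finset.mem_range,
            Finset.mem_univ, true_and]
          have : (q.2 : ℕ) ≤ m := by omega
          omega
        · intro p hp
          obtain ⟨i, u⟩ := p
          simp only [Prod.mk.injEq, true_and]
          omega
        · intro q hq
          obtain ⟨s, i⟩ := q
          simp only [Finset.mem_product, Finset.mem_Icc, Finset.mem_univ, and_true] at hq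
          have hi := i.isLt
          simp only [Prod.mk.injEq, and_true]
          omega
        · intro p hp
          obtain ⟨i, u⟩ := p
          simp
      rw [hmid, Finset.sum_product]
      have hz : ∀ s ∈ Finset.Icc (m + 1) k,
          (∑ i : Fin (m + 1), T i (s - (i : ℕ))) = 0 := by
        intro s hs
        rw [Finset.mem_Icc] at hs
        have heach : ∀ i : Fin (m + 1), T i (s - (i : ℕ))
            = C (lam i * ((k + 1).choose (s - (i : ℕ)) : K))
              * (X 0 ^ (d * s) * X 1 ^ (d * (k + 1 + m - s))) := by
          intro i
          have hi : (i : ℕ) ≤ m := by omega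
          have e1 : d * (i : ℕ) + d * (s - (i : ℕ)) = d * s := by
            rw [← Nat.left_distrib]
            congr 1
            omega
          have e2 : d * (m - (i : ℕ)) + d * (k + 1 - (s - (i : ℕ))) = d * (k + 1 + m - s) := by
            rw [← Nat.left_distrib]
            congr 1
            omega
          rw [hT]
          simp only []
          rw [map_mul, ← map_natCast (C : K →+* MvPolynomial (Fin 2) K)]
          rw [← pow_mul, ← pow_mul, ← e1, ← e2, pow_add, pow_add]
          ring
        rw [Finset.sum_congr rfl (fun i _ => heach i), ← Finset.sum_mul, ← map_sum,
          hlam s hs.1 hs.2, map_zero, zero_mul]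
      rw [Finset.sum_congr rfl hz, Finset.sum_const, smul_zero]
      exact I.zero_mem
    · -- i + u ≤ m : Y-power large
      apply Ideal.sum_mem
      intro p hp
      simp only [Finset.mem_filter, Finset.mem_product, Finset.mem_range, Finset.mem_univ,
        true_and, not_le] at hp
      obtain ⟨⟨hp2, hpk⟩, hpm⟩ := hp
      set i := p.1
      set u := p.2
      have hiu : (i : ℕ) + u ≤ m := by omega
      have hkey : d * (m - (i : ℕ)) + d * (k + 1 - u) ≥ b := by
        have h1 : k + 1 ≤ (m - (i : ℕ)) + (k + 1 - u) := by omega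
        calc b ≤ d * (k + 1) := by rw [hb]; nlinarith
        _ ≤ d * ((m - (i : ℕ)) + (k + 1 - u)) := Nat.mul_le_mul_left d h1
        _ = d * (m - (i : ℕ)) + d * (k + 1 - u) := by ring
      have : T i u = (C (lam i) * X 0 ^ (d * (i : ℕ)) * (X 0 ^ d) ^ u
            * ((k + 1).choose u : MvPolynomial (Fin 2) K))
          * X 1 ^ (d * (m - (i : ℕ)) + d * (k + 1 - u)) := by
        rw [hT]
        simp only []
        rw [pow_add, ← pow_mul]
        ring
      rw [this]
      exact Ideal.mul_mem_left _ _ (hyI _ hkey)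
  · -- k < i + u : X-power large
    apply Ideal.sum_mem
    intro p hp
    simp only [Finset.mem_filter, Finset.mem_product, Finset.mem_range, Finset.mem_univ,
      true_and, not_le] at hp
    obtain ⟨hp2, hpk⟩ := hp
    set i := p.1
    set u := p.2
    have hkey : d * (i : ℕ) + d * u ≥ b := by
      have h1 : k + 1 ≤ (i : ℕ) + u := by omega
      calc b ≤ d * (k + 1) := by rw [hb]; nlinarith
      _ ≤ d * ((i : ℕ) + u) := Nat.mul_le_mul_left d h1
      _ = d * (i : ℕ) + d * u := by ring
    have : T i u = (C (lam i) * X 1 ^ (d * (m - (i : ℕ))) * (X 1 ^ d) ^ (k + 1 - u)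
          * ((k + 1).choose u : MvPolynomial (Fin 2) K))
        * X 0 ^ (d * (i : ℕ) + d * u) := by
      rw [hT]
      simp only []
      rw [pow_add, ← pow_mul]
      ring
    rw [this]
    exact Ideal.mul_mem_left _ _ (hxI _ hkey)
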